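/- arXiv:1806.05316 — 4 statements merged into one kernel-verified Lean document; each statement's English description precedes it below -/
import Mathlib

section
/- Let L > 0 and t ≥ 0. If t ≤ 2L then ∫_{−2}^{2} max( L·√(4−u²)/(2π) − t/(2π), 0 ) du = (2L/π)·arcsin(√(4L²−t²)/(2L)) − (t/(2πL))·√(4L²−t²), and if t ≥ 2L then ∫_{−2}^{2} max( L·√(4−u²)/(2π) − t/(2π), 0 ) du = 0. -/
open MeasureTheory Real intervalIntegral

private lemma gue_deriv_aux (x : ℝ) (hx : x ∈ Set.Ioo (-2:ℝ) 2) :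
    HasDerivAt (fun y : ℝ => y * Real.sqrt (4 - y^2)/2 + 2 * Real.arcsin (y/2))
      (Real.sqrt (4 - x^2)) x := by
  have hx1 : x^2 < 4 := by nlinarith [hx.1, hx.2]
  have hpos : (0:ℝ) < 4 - x^2 := by linarith
  have hs : 0 < Real.sqrt (4 - x^2) := Real.sqrt_pos.mpr hpos
  have h1 : HasDerivAt (fun y : ℝ => 4 - y^2) (-(2*x)) x := by
    simpa using ((hasDerivAt_pow 2 x).const_sub 4)
  have h2 : HasDerivAt (fun y : ℝ => Real.sqrt (4 - y^2)) (-x / Real.sqrt (4 - x^2)) x := by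
    have := (Real.hasDerivAt_sqrt (ne_of_gt hpos)).comp x h1
    refine this.congr_deriv ?_
    field_simp
  have h3 : HasDerivAt (fun y : ℝ => y * Real.sqrt (4 - y^2) / 2)
      ((1 * Real.sqrt (4 - x^2) + x * (-x / Real.sqrt (4 - x^2))) / 2) x :=
    ((hasDerivAt_id x).mul h2).div_const 2
  have h4 : HasDerivAt (fun y : ℝ => Real.arcsin (y/2)) (1 / Real.sqrt (1 - (x/2)^2) * (1/2)) x := by
    have hd : HasDerivAt (fun y : ℝ => y/2) (1/2) x := (hasDerivAt_id x).div_const 2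
    have := (Real.hasDerivAt_arcsin (by nlinarith : x/2 ≠ -1) (by nlinarith : x/2 ≠ 1)).comp x hd
    exact this
  have h5 := h3.add (h4.const_mul 2)
  refine h5.congr_deriv ?_
  have h14 : Real.sqrt (1 - (x/2)^2) = Real.sqrt (4 - x^2) / 2 := by
    rw [show 1-(x/2)^2 = (Real.sqrt (4-x^2)/2)^2 by
      have h := Real.sq_sqrt hpos.le; nlinarith [h]]
    exact Real.sqrt_sq (by positivity)
  rw [h14]
  have hsq : Real.sqrt (4-x^2) * Real.sqrt (4-x^2) = 4 - x^2 := Real.mul_self_sqrt hpos.le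
  field_simp
  nlinarith [hsq]

private lemma gue_cont_sqrt : Continuous fun u : ℝ => Real.sqrt (4 - u^2) :=
  (continuous_const.sub (continuous_pow 2)).sqrt

private lemma gue_sqrt_int (a : ℝ) (ha0 : 0 ≤ a) (ha2 : a ≤ 2) :
    ∫ u in (-a)..a, Real.sqrt (4 - u^2)
      = a * Real.sqrt (4 - a^2) + 4 * Real.arcsin (a/2) := by
  have hF : ContinuousOn (fun y : ℝ => y * Real.sqrt (4 - y^2)/2 + 2 * Real.arcsin (y/2))
      (Set.Icc (-a) a) := by
    apply Continuous.continuousOn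
    exact ((continuous_id.mul gue_cont_sqrt).div_const 2).add
      (continuous_const.mul (Real.continuous_arcsin.comp (continuous_id.div_const 2)))
  have key := intervalIntegral.integral_eq_sub_of_hasDeriv_right_of_le
    (by linarith : -a ≤ a) hF
    (fun x hx => (gue_deriv_aux x ⟨by linarith [hx.1], by linarith [hx.2]⟩).hasDerivWithinAt)
    (gue_cont_sqrt.intervalIntegrable _ _)
  rw [key]
  simp only [neg_sq, neg_div, Real.arcsin_neg, neg_mul]
  ring

/-- Refined connected two-point form factor integral for the GUE (Wigner semicircle density
`ρ(u) = √(4−u²)/(2π)`): for `L > 0`, `t ≥ 0`,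
if `t ≤ 2L` then `∫_{-2}^{2} max(Lρ(u) − t/(2π), 0) du
  = (2L/π) arcsin(√(4L²−t²)/(2L)) − (t/(2πL))√(4L²−t²)`,
and if `t ≥ 2L` then the integral vanishes. -/
theorem gue_refined_form_factor_integral (L t : ℝ) (hL : 0 < L) (ht : 0 ≤ t) :
    (t ≤ 2 * L →
      (∫ u in (-2:ℝ)..2,
          max (L * Real.sqrt (4 - u^2) / (2 * Real.pi) - t / (2 * Real.pi)) 0)
        = (2 * L / Real.pi) * Real.arcsin (Real.sqrt (4 * L^2 - t^2) / (2 * L))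
            - (t / (2 * Real.pi * L)) * Real.sqrt (4 * L^2 - t^2)) ∧
    (2 * L ≤ t →
      (∫ u in (-2:ℝ)..2,
          max (L * Real.sqrt (4 - u^2) / (2 * Real.pi) - t / (2 * Real.pi)) 0) = 0) := by
  have hπ : (0:ℝ) < Real.pi := Real.pi_pos
  have hcont : Continuous fun u : ℝ =>
      max (L * Real.sqrt (4 - u^2) / (2 * Real.pi) - t / (2 * Real.pi)) 0 :=
    (((continuous_const.mul gue_cont_sqrt).div_const _).sub continuous_const).max
      continuous_const
  constructor
  · intro htL
    set a : ℝ := Real.sqrt (4*L^2 - t^2) / L with ha_def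
    have h4 : 0 ≤ 4*L^2 - t^2 := by nlinarith
    have ha0 : 0 ≤ a := div_nonneg (Real.sqrt_nonneg _) hL.le
    have ha2 : a ≤ 2 := by
      rw [ha_def, div_le_iff₀ hL]
      rw [show (2:ℝ)*L = Real.sqrt ((2*L)^2) from (Real.sqrt_sq (by positivity)).symm]
      exact Real.sqrt_le_sqrt (by nlinarith)
    have hA : Real.sqrt (4*L^2 - t^2) = a * L := by
      rw [ha_def]; field_simp
    have haa : a^2 = 4 - t^2/L^2 := by
      rw [ha_def, div_pow, Real.sq_sqrt h4]; field_simp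
    have hsq : Real.sqrt (4 - a^2) = t / L := by
      rw [haa, show 4 - (4 - t^2/L^2) = (t/L)^2 by ring]
      exact Real.sqrt_sq (by positivity)
    -- outer intervals vanish
    have houter : ∀ u : ℝ, a^2 ≤ u^2 →
        max (L * Real.sqrt (4 - u^2) / (2 * Real.pi) - t / (2 * Real.pi)) 0 = 0 := by
      intro u hu
      apply max_eq_right
      have h1 : Real.sqrt (4 - u^2) ≤ t / L := by
        rw [← hsq]; exact Real.sqrt_le_sqrt (by linarith)
      have h2 : L * Real.sqrt (4 - u^2) ≤ t := by
        rw [mul_comm, ← le_div_iff₀ hL]; exact h1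
      rw [div_sub_div_same]
      apply div_nonpos_of_nonpos_of_nonneg (by linarith) (by positivity)
    have hright : (∫ u in a..(2:ℝ),
        max (L * Real.sqrt (4 - u^2) / (2 * Real.pi) - t / (2 * Real.pi)) 0) = 0 := by
      rw [intervalIntegral.integral_congr (g := fun _ => (0:ℝ))
        (fun u hu => by
          rw [Set.uIcc_of_le ha2] at hu
          exact houter u (by nlinarith [hu.1, hu.2]))]
      simp
    have hleft : (∫ u in (-2:ℝ)..(-a),
        max (L * Real.sqrt (4 - u^2) / (2 * Real.pi) - t / (2 * Real.pi)) 0) = 0 := by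
      rw [intervalIntegral.integral_congr (g := fun _ => (0:ℝ))
        (fun u hu => by
          rw [Set.uIcc_of_le (by linarith : (-2:ℝ) ≤ -a)] at hu
          exact houter u (by nlinarith [hu.1, hu.2]))]
      simp
    have hmid : (∫ u in (-a)..a,
        max (L * Real.sqrt (4 - u^2) / (2 * Real.pi) - t / (2 * Real.pi)) 0)
        = ∫ u in (-a)..a, (L * Real.sqrt (4 - u^2) - t) / (2 * Real.pi) := by
      apply intervalIntegral.integral_congr
      intro u hu
      rw [Set.uIcc_of_le (by linarith : -a ≤ a)] at hu
      have hu2 : u^2 ≤ a^2 := by nlinarith [hu.1, hu.2]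
      have h1 : t / L ≤ Real.sqrt (4 - u^2) := by
        rw [← hsq]; exact Real.sqrt_le_sqrt (by linarith)
      have h2 : t ≤ L * Real.sqrt (4 - u^2) := by
        rw [mul_comm, ← div_le_iff₀ hL]; exact h1
      dsimp only
      rw [max_eq_left]
      · ring
      · rw [div_sub_div_same]
        apply div_nonneg (by linarith) (by positivity)
    have hsplit1 : (∫ u in (-2:ℝ)..(-a),
          max (L * Real.sqrt (4 - u^2) / (2 * Real.pi) - t / (2 * Real.pi)) 0)
        + (∫ u in (-a)..a,
          max (L * Real.sqrt (4 - u^2) / (2 * Real.pi) - t / (2 * Real.pi)) 0)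
        = ∫ u in (-2:ℝ)..a,
          max (L * Real.sqrt (4 - u^2) / (2 * Real.pi) - t / (2 * Real.pi)) 0 :=
      intervalIntegral.integral_add_adjacent_intervals
        (hcont.intervalIntegrable _ _) (hcont.intervalIntegrable _ _)
    have hsplit2 : (∫ u in (-2:ℝ)..a,
          max (L * Real.sqrt (4 - u^2) / (2 * Real.pi) - t / (2 * Real.pi)) 0)
        + (∫ u in a..(2:ℝ),
          max (L * Real.sqrt (4 - u^2) / (2 * Real.pi) - t / (2 * Real.pi)) 0)
        = ∫ u in (-2:ℝ)..2,
          max (L * Real.sqrt (4 - u^2) / (2 * Real.pi) - t / (2 * Real.pi)) 0 :=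
      intervalIntegral.integral_add_adjacent_intervals
        (hcont.intervalIntegrable _ _) (hcont.intervalIntegrable _ _)
    rw [← hsplit2, ← hsplit1, hleft, hright, hmid, zero_add, add_zero]
    have hI : (∫ u in (-a)..a, (L * Real.sqrt (4 - u^2) - t) / (2 * Real.pi))
        = (L * (a * (t/L) + 4 * Real.arcsin (a/2)) - (a - -a) * t) / (2 * Real.pi) := by
      rw [intervalIntegral.integral_div, intervalIntegral.integral_sub
          (show IntervalIntegrable (fun u : ℝ => L * Real.sqrt (4 - u^2)) volume (-a) a from
            (continuous_const.mul gue_cont_sqrt).intervalIntegrable _ _)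
          (intervalIntegrable_const),
        intervalIntegral.integral_const_mul, intervalIntegral.integral_const,
        gue_sqrt_int a ha0 ha2, hsq, smul_eq_mul]
    rw [hI, hA, show a * L / (2 * L) = a / 2 by field_simp]
    field_simp
    ring
  · intro htL
    rw [intervalIntegral.integral_congr (g := fun _ => (0:ℝ))
      (fun u hu => by
        apply max_eq_right
        have h1 : Real.sqrt (4 - u^2) ≤ 2 := by
          rw [show (2:ℝ) = Real.sqrt 4 by
            rw [show (4:ℝ) = 2^2 by norm_num, Real.sqrt_sq (by norm_num)]]
          exact Real.sqrt_le_sqrt (by nlinarith)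
        have h2 : L * Real.sqrt (4 - u^2) ≤ t := by nlinarith
        rw [div_sub_div_same]
        apply div_nonpos_of_nonpos_of_nonneg (by linarith) (by positivity))]
    simp
end

section
/- Let L > 0 and define f(t) = L − ∫_{−2}^{2} max( L·√(4−u²)/(2π) − t/(2π), 0 ) du for t ≥ 0. Then as t → 0⁺, f(t) = 2t/π − t³/(12πL²) − t⁵/(320πL⁴) + O(t⁶); in particular the refined connected two-point form factor has initial slope 2/π. -/
open MeasureTheory Real Asymptotics

lemma hderivF (u : ℝ) (hu : u^2 < 4) :
    HasDerivAt (fun u : ℝ => u * Real.sqrt (4 - u^2) / 2 + 2 * Real.arcsin (u/2))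
      (Real.sqrt (4 - u^2)) u := by
  have h4 : (0:ℝ) < 4 - u^2 := by linarith
  have hr : 0 < Real.sqrt (4 - u^2) := Real.sqrt_pos.mpr h4
  set r := Real.sqrt (4 - u^2) with hrdef
  have hr2 : r^2 = 4 - u^2 := Real.sq_sqrt h4.le
  have hu1 : -2 < u := by nlinarith
  have hu2 : u < 2 := by nlinarith
  have hinner : HasDerivAt (fun u : ℝ => 4 - u^2) (-(2*u)) u := by
    simpa using (hasDerivAt_pow 2 u).const_sub 4
  have hsqrt : HasDerivAt (fun u : ℝ => Real.sqrt (4 - u^2)) (-u / r) u := by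
    have := (Real.hasDerivAt_sqrt (ne_of_gt h4)).comp u hinner
    refine this.congr_deriv ?_
    field_simp
    ring
  have hmul : HasDerivAt (fun u : ℝ => u * Real.sqrt (4 - u^2) / 2)
      ((1 * r + u * (-u / r)) / 2) u :=
    ((hasDerivAt_id u).mul hsqrt).div_const 2
  have hhalf : Real.sqrt (1 - (u/2)^2) = r / 2 := by
    have h42 : Real.sqrt 4 = 2 := by
      rw [show (4:ℝ) = 2^2 by norm_num, Real.sqrt_sq (by norm_num : (0:ℝ) ≤ 2)]
    rw [show (1 - (u/2)^2) = (4 - u^2)/4 by ring, Real.sqrt_div h4.le, h42]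
  have harc : HasDerivAt (fun u : ℝ => 2 * Real.arcsin (u/2)) (2 * (1 / (r/2) * (1/2))) u := by
    have hin : HasDerivAt (fun u : ℝ => u / 2) (1/2) u := (hasDerivAt_id u).div_const 2
    have := (Real.hasDerivAt_arcsin (by intro h; rw [div_eq_iff (by norm_num : (2:ℝ) ≠ 0)] at h; linarith)
      (by intro h; rw [div_eq_iff (by norm_num : (2:ℝ) ≠ 0)] at h; linarith)).comp u hin
    rw [hhalf] at this
    exact this.const_mul 2
  have := hmul.add harc
  refine this.congr_deriv ?_
  field_simp
  nlinarith [hr2, hr]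

lemma sqrt_int (a : ℝ) (ha : 0 ≤ a) (ha2 : a < 2) :
    ∫ u in (-a:ℝ)..a, Real.sqrt (4 - u^2)
      = a * Real.sqrt (4 - a^2) + 4 * Real.arcsin (a/2) := by
  have hcont : Continuous (fun u : ℝ => Real.sqrt (4 - u^2)) := by fun_prop
  have h := intervalIntegral.integral_eq_sub_of_hasDerivAt
    (f := fun u : ℝ => u * Real.sqrt (4 - u^2) / 2 + 2 * Real.arcsin (u/2))
    (f' := fun u : ℝ => Real.sqrt (4 - u^2)) (a := -a) (b := a)
    (fun x hx => by
      apply hderivF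
      rw [Set.uIcc_of_le (by linarith)] at hx
      obtain ⟨h1, h2⟩ := hx
      nlinarith)
    (hcont.intervalIntegrable _ _)
  rw [h]
  rw [show ((-a)^2 : ℝ) = a^2 by ring, show (-a/2 : ℝ) = -(a/2) by ring, Real.arcsin_neg]
  ring

lemma f_exact (L t : ℝ) (hL : 0 < L) (ht : 0 < t) (htL : t < L) :
    L - (∫ u in (-2:ℝ)..2,
        max (L * Real.sqrt (4 - u^2) / (2 * Real.pi) - t / (2 * Real.pi)) 0)
      = 2*L/Real.pi * (Real.arcsin (t/(2*L))
          + (t/(2*L)) * Real.sqrt (1 - (t/(2*L))^2)) := by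
  have hpi : 0 < Real.pi := Real.pi_pos
  set s := t/(2*L) with hs
  have hs0 : 0 < s := by positivity
  have hs1 : s < 1/2 := by
    rw [hs, div_lt_iff₀ (by positivity)]; linarith
  have hs2 : (0:ℝ) < 1 - s^2 := by nlinarith
  set a := 2 * Real.sqrt (1 - s^2) with ha
  have ha2 : a^2 = 4 - 4*s^2 := by
    rw [ha, mul_pow, Real.sq_sqrt hs2.le]; ring
  have ha0 : 0 < a := mul_pos two_pos (Real.sqrt_pos.mpr hs2)
  have ha4 : a < 2 := by nlinarith
  have hsq : Real.sqrt (1 - s^2) = a/2 := by rw [ha]; ring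
  have htL2 : (4:ℝ) - a^2 = (t/L)^2 := by
    rw [ha2, hs]; field_simp; ring
  have hsqa : Real.sqrt (4 - a^2) = t/L := by
    rw [htL2, Real.sqrt_sq (by positivity)]
  set g : ℝ → ℝ := fun u =>
    max (L * Real.sqrt (4 - u^2) / (2 * Real.pi) - t / (2 * Real.pi)) 0 with hg
  have hcont : Continuous g := by
    apply Continuous.max _ continuous_const
    fun_prop
  have hii : ∀ b c : ℝ, IntervalIntegrable g volume b c :=
    fun b c => hcont.intervalIntegrable b c
  have houter : ∀ u : ℝ, a^2 ≤ u^2 → g u = 0 := by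
    intro u hu
    have h1 : Real.sqrt (4 - u^2) ≤ t/L := by
      rw [← hsqa]; exact Real.sqrt_le_sqrt (by linarith)
    have h2 : L * Real.sqrt (4 - u^2) ≤ t := by
      have := mul_le_mul_of_nonneg_left h1 hL.le
      rwa [mul_comm L (t/L), div_mul_cancel₀ t (ne_of_gt hL)] at this
    exact max_eq_right (sub_nonpos.mpr (by gcongr))
  have hinner : ∀ u : ℝ, u^2 ≤ a^2 →
      g u = L/(2*Real.pi) * Real.sqrt (4 - u^2) - t/(2*Real.pi) := by
    intro u hu
    have h1 : t/L ≤ Real.sqrt (4 - u^2) := by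
      rw [← hsqa]; exact Real.sqrt_le_sqrt (by linarith)
    have h2 : t ≤ L * Real.sqrt (4 - u^2) := by
      have := mul_le_mul_of_nonneg_left h1 hL.le
      rwa [mul_comm L (t/L), div_mul_cancel₀ t (ne_of_gt hL)] at this
    rw [hg]
    simp only
    rw [max_eq_left (sub_nonneg.mpr (by gcongr))]
    ring
  have e1 : ∫ u in (-2:ℝ)..(-a), g u = 0 := by
    have heq : Set.EqOn g (fun _ => (0:ℝ)) (Set.uIcc (-2:ℝ) (-a)) := by
      intro u hu
      rw [Set.uIcc_of_le (by linarith)] at hu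
      exact houter u (by nlinarith [hu.1, hu.2])
    rw [intervalIntegral.integral_congr heq, intervalIntegral.integral_zero]
  have e3 : ∫ u in (a:ℝ)..2, g u = 0 := by
    have heq : Set.EqOn g (fun _ => (0:ℝ)) (Set.uIcc (a:ℝ) 2) := by
      intro u hu
      rw [Set.uIcc_of_le (by linarith)] at hu
      exact houter u (by nlinarith [hu.1, hu.2])
    rw [intervalIntegral.integral_congr heq, intervalIntegral.integral_zero]
  have e2 : ∫ u in (-a:ℝ)..a, g u
      = L/(2*Real.pi) * (a * (t/L) + 4 * Real.arcsin (a/2)) - (a - -a) * (t/(2*Real.pi)) := by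
    have heq : Set.EqOn g
        (fun u => L/(2*Real.pi) * Real.sqrt (4 - u^2) - t/(2*Real.pi))
        (Set.uIcc (-a:ℝ) a) := by
      intro u hu
      rw [Set.uIcc_of_le (by linarith)] at hu
      exact hinner u (by nlinarith [hu.1, hu.2])
    rw [intervalIntegral.integral_congr heq,
      intervalIntegral.integral_sub
        ((by fun_prop : Continuous (fun u : ℝ =>
          L/(2*Real.pi) * Real.sqrt (4 - u^2))).intervalIntegrable _ _)
        intervalIntegrable_const,
      intervalIntegral.integral_const_mul, sqrt_int a ha0.le ha4, hsqa,
      intervalIntegral.integral_const, smul_eq_mul]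
  have harc : Real.arcsin (a/2) = Real.pi/2 - Real.arcsin s := by
    have h1 : Real.arcsin s ≤ Real.pi/2 := Real.arcsin_le_pi_div_two s
    have h2 : 0 ≤ Real.arcsin s := Real.arcsin_nonneg.mpr hs0.le
    rw [← hsq, ← Real.cos_arcsin, ← Real.sin_pi_div_two_sub,
      Real.arcsin_sin (by linarith) (by linarith)]
  rw [← intervalIntegral.integral_add_adjacent_intervals (hii (-2) (-a)) (hii (-a) 2),
    ← intervalIntegral.integral_add_adjacent_intervals (hii (-a) a) (hii a 2),
    e1, e2, e3, harc, hsq, show t = 2*L*s from by rw [hs]; field_simp]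
  field_simp
  ring

lemma hderivG (x : ℝ) (hx : x^2 < 1) :
    HasDerivAt (fun x : ℝ => Real.arcsin x + x * Real.sqrt (1 - x^2)
        - (2*x - x^3/3 - x^5/20))
      (2 * Real.sqrt (1 - x^2) - 2 + x^2 + x^4/4) x := by
  have h1 : (0:ℝ) < 1 - x^2 := by linarith
  have hr : 0 < Real.sqrt (1 - x^2) := Real.sqrt_pos.mpr h1
  set r := Real.sqrt (1 - x^2) with hrdef
  have hr2 : r^2 = 1 - x^2 := Real.sq_sqrt h1.le
  have hx1 : x ≠ 1 := by intro h; rw [h] at hx; norm_num at hx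
  have hx2 : x ≠ -1 := by intro h; rw [h] at hx; norm_num at hx
  have harcsin : HasDerivAt Real.arcsin (1 / r) x := Real.hasDerivAt_arcsin hx2 hx1
  have hinner : HasDerivAt (fun x : ℝ => 1 - x^2) (-(2*x)) x := by
    simpa using (hasDerivAt_pow 2 x).const_sub 1
  have hsqrt : HasDerivAt (fun x : ℝ => Real.sqrt (1 - x^2)) (-x / r) x := by
    have := (Real.hasDerivAt_sqrt (ne_of_gt h1)).comp x hinner
    refine this.congr_deriv ?_
    field_simp; ring
  have hmul : HasDerivAt (fun x : ℝ => x * Real.sqrt (1 - x^2))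
      (1 * r + x * (-x / r)) x := (hasDerivAt_id x).mul hsqrt
  have hpoly : HasDerivAt (fun x : ℝ => 2*x - x^3/3 - x^5/20)
      (2 - x^2 - x^4/4) x := by
    have := (((hasDerivAt_id x).const_mul 2).sub ((hasDerivAt_pow 3 x).div_const 3)).sub
      ((hasDerivAt_pow 5 x).div_const 20)
    refine this.congr_deriv ?_
    simp; ring
  have := (harcsin.add hmul).sub hpoly
  refine this.congr_deriv ?_
  field_simp
  nlinarith [hr2, hr]

lemma hbound (x : ℝ) (h0 : 0 ≤ x) (h1 : x ≤ 1/2) :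
    |2 * Real.sqrt (1 - x^2) - 2 + x^2 + x^4/4| ≤ x^6 := by
  have hle : (0:ℝ) ≤ 1 - x^2 := by nlinarith
  have hr0 : 0 ≤ Real.sqrt (1 - x^2) := Real.sqrt_nonneg _
  have hr2 : (Real.sqrt (1 - x^2))^2 = 1 - x^2 := Real.sq_sqrt hle
  set r := Real.sqrt (1 - x^2)
  rw [abs_le]
  constructor
  · have hx2 : x^2 ≤ 1/4 := by nlinarith
    have h6 : (0:ℝ) ≤ x^6 := by positivity
    have h8 : x^8 ≤ x^6/4 := by nlinarith [h6, hx2]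
    have h10 : x^10 ≤ x^6/16 := by nlinarith [h6, hx2, h8]
    have h12 : x^12 ≤ x^6/64 := by nlinarith [h6, hx2, h10]
    have hB0 : (0:ℝ) ≤ 1 - x^2/2 - x^4/8 - x^6/2 := by nlinarith [h6, hx2, sq_nonneg x]
    have hB2 : (1 - x^2/2 - x^4/8 - x^6/2)^2 ≤ 1 - x^2 := by nlinarith [h6, h8, h10, h12]
    have hBr : 1 - x^2/2 - x^4/8 - x^6/2 ≤ r := by
      nlinarith [hB0, hr0, hB2, hr2]
    linarith
  · nlinarith [sq_nonneg (r - (1 - x^2/2 - x^4/8)), sq_nonneg x, sq_nonneg (x^3)]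

lemma g_bound (s : ℝ) (h0 : 0 ≤ s) (h1 : s ≤ 1/2) :
    |Real.arcsin s + s * Real.sqrt (1 - s^2) - (2*s - s^3/3 - s^5/20)| ≤ s^6 := by
  set G : ℝ → ℝ := fun x => Real.arcsin x + x * Real.sqrt (1 - x^2)
    - (2*x - x^3/3 - x^5/20) with hG
  have hmvt := Convex.norm_image_sub_le_of_norm_hasDerivWithin_le
    (f := G) (f' := fun x => 2 * Real.sqrt (1 - x^2) - 2 + x^2 + x^4/4)
    (s := Set.Icc 0 s) (C := s^6)
    (fun x hx => (hderivG x (by nlinarith [hx.1, hx.2])).hasDerivWithinAt)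
    (fun x hx => by
      rw [Real.norm_eq_abs]
      calc |2 * Real.sqrt (1 - x^2) - 2 + x^2 + x^4/4| ≤ x^6 :=
            hbound x hx.1 (le_trans hx.2 h1)
        _ ≤ s^6 := by gcongr; exact hx.1; exact hx.2)
    (convex_Icc 0 s) (Set.left_mem_Icc.mpr h0) (Set.right_mem_Icc.mpr h0)
  have hG0 : G 0 = 0 := by simp [hG]
  rw [hG0, sub_zero, Real.norm_eq_abs, Real.norm_eq_abs, sub_zero] at hmvt
  calc |G s| ≤ s^6 * |s| := hmvt
    _ ≤ s^6 * 1 := by gcongr; rw [abs_of_nonneg h0]; linarith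
    _ = s^6 := mul_one _

/-- Small-time expansion of the refined connected two-point form factor of the GUE:
with `f(t) = L − ∫_{-2}^{2} max(L√(4−u²)/(2π) − t/(2π), 0) du`, as `t → 0⁺`,
`f(t) = 2t/π − t³/(12πL²) − t⁵/(320πL⁴) + O(t⁶)`. -/
theorem gue_refined_form_factor_small_time (L : ℝ) (hL : 0 < L) :
    (fun t : ℝ =>
        (L - ∫ u in (-2:ℝ)..2,
            max (L * Real.sqrt (4 - u^2) / (2 * Real.pi) - t / (2 * Real.pi)) 0)
          - (2 * t / Real.pi - t^3 / (12 * Real.pi * L^2) - t^5 / (320 * Real.pi * L^4)))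
      =O[nhdsWithin 0 (Set.Ioi 0)] (fun t : ℝ => t^6) := by
  have hpi : 0 < Real.pi := Real.pi_pos
  rw [Asymptotics.isBigO_iff]
  refine ⟨2*L/Real.pi * (1/(2*L))^6, ?_⟩
  filter_upwards [Ioo_mem_nhdsGT hL] with t ht
  obtain ⟨ht0, htL⟩ := ht
  rw [f_exact L t hL ht0 htL]
  set s := t/(2*L) with hs
  have hs0 : 0 < s := by positivity
  have hs1 : s < 1/2 := by rw [hs, div_lt_iff₀ (by positivity)]; linarith
  have key := g_bound s hs0.le hs1.le
  have hpoly : 2*t/Real.pi - t^3/(12*Real.pi*L^2) - t^5/(320*Real.pi*L^4)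
      = 2*L/Real.pi * (2*s - s^3/3 - s^5/20) := by
    rw [hs]; field_simp; ring
  rw [Real.norm_eq_abs, Real.norm_eq_abs, hpoly,
    show 2*L/Real.pi * (Real.arcsin s + s * Real.sqrt (1-s^2))
        - 2*L/Real.pi * (2*s - s^3/3 - s^5/20)
      = 2*L/Real.pi * (Real.arcsin s + s * Real.sqrt (1-s^2) - (2*s - s^3/3 - s^5/20))
      from by ring,
    abs_mul, abs_of_pos (by positivity : (0:ℝ) < 2*L/Real.pi)]
  calc 2*L/Real.pi * |Real.arcsin s + s * Real.sqrt (1-s^2) - (2*s - s^3/3 - s^5/20)|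
      ≤ 2*L/Real.pi * s^6 := by gcongr
    _ = 2*L/Real.pi * (1/(2*L))^6 * |t^6| := by
        rw [abs_of_pos (by positivity : (0:ℝ) < t^6), hs]
        field_simp
end

section
/- Let L > 0 and 0 ≤ t ≤ 2L. Then ∫_{−2}^{2} 2u²·max( L·√(4−u²)/(2π) − t/(2π), 0 ) du = ( (t³ − 10L²t)·√(4L²−t²) + 24L⁴·arcsin(√(4L²−t²)/(2L)) ) / (6πL³). -/
open MeasureTheory Real

lemma gue_deriv_aux_s5 (L t : ℝ) (u : ℝ) (hu1 : -2 < u) (hu2 : u < 2) :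
    HasDerivAt (fun u => (L*(2*Real.arcsin (u/2) - u*(4-2*u^2)*Real.sqrt (4-u^2)/8) - t*u^3/3)/Real.pi)
      ((L*u^2*Real.sqrt (4-u^2) - t*u^2)/Real.pi) u := by
  have hs0 : 0 < 4 - u^2 := by nlinarith
  set s := Real.sqrt (4-u^2) with hsdef
  have hsp : 0 < s := Real.sqrt_pos.mpr hs0
  have hs2 : s^2 = 4 - u^2 := Real.sq_sqrt hs0.le
  have h14 : Real.sqrt (1 - (u/2)^2) = s/2 := by
    rw [show (1 - (u/2)^2) = (4-u^2)/(2^2) by ring, hsdef]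
    rw [Real.sqrt_div hs0.le, Real.sqrt_sq (by norm_num)]
  have harc : HasDerivAt (fun u : ℝ => Real.arcsin (u/2)) (1/s) u := by
    have h := (Real.hasDerivAt_arcsin (by intro h; simp at h; linarith)
      (by intro h; simp at h; linarith)).comp u ((hasDerivAt_id u).div_const 2)
    refine h.congr_deriv ?_
    simp only [id_eq]
    rw [h14]
    field_simp
  have hq : HasDerivAt (fun u : ℝ => Real.sqrt (4-u^2)) (-u/s) u := by
    have hbase : HasDerivAt (fun u : ℝ => 4 - u^2) (-(2*u^1)) u := (hasDerivAt_pow 2 u).const_sub 4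
    have h := hbase.sqrt hs0.ne'
    convert h using 1
    rw [← hsdef]
    field_simp
  have hpoly : HasDerivAt (fun u : ℝ => u*(4-2*u^2)) (1*(4-2*u^2) + u*(-(2*(2*u^1)))) u :=
    (hasDerivAt_id u).mul (((hasDerivAt_pow 2 u).const_mul 2).const_sub 4)
  have h1 : HasDerivAt (fun u : ℝ => u*(4-2*u^2)*Real.sqrt (4-u^2))
      ((1*(4-2*u^2) + u*(-(2*(2*u^1))))*s + u*(4-2*u^2)*(-u/s)) u := hpoly.mul hq
  have hcube : HasDerivAt (fun u : ℝ => u^3) (3*u^2) u := by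
    simpa using hasDerivAt_pow 3 u
  have final := ((((harc.const_mul 2).sub (h1.div_const 8)).const_mul L).sub
    ((hcube.const_mul t).div_const 3)).div_const Real.pi
  refine final.congr_deriv ?_
  symm
  have hπ := Real.pi_ne_zero
  field_simp
  linear_combination (2*L*(u^2+2)) * hs2

/-- The `β²` coefficient in the small-`β` expansion of the finite-temperature refined connected
two-point form factor of the GUE: for `L > 0` and `0 ≤ t ≤ 2L`,
`∫_{-2}^{2} 2u² max(L√(4−u²)/(2π) − t/(2π), 0) du
  = ((t³ − 10L²t)√(4L²−t²) + 24L⁴ arcsin(√(4L²−t²)/(2L))) / (6πL³)`. -/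
theorem gue_refined_form_factor_beta_sq (L t : ℝ) (hL : 0 < L) (ht0 : 0 ≤ t)
    (ht : t ≤ 2 * L) :
    (∫ u in (-2:ℝ)..2,
        2 * u^2 * max (L * Real.sqrt (4 - u^2) / (2 * Real.pi) - t / (2 * Real.pi)) 0)
      = ((t^3 - 10 * L^2 * t) * Real.sqrt (4 * L^2 - t^2)
          + 24 * L^4 * Real.arcsin (Real.sqrt (4 * L^2 - t^2) / (2 * L)))
        / (6 * Real.pi * L^3) := by
  have hπ : (0:ℝ) < Real.pi := Real.pi_pos
  have hL2 : (0:ℝ) < L^2 := by positivity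
  have ht2 : t^2 ≤ 4*L^2 := by nlinarith
  set a := Real.sqrt (4 - t^2/L^2) with hadef
  have hnn : 0 ≤ 4 - t^2/L^2 := by
    rw [sub_nonneg, div_le_iff₀ hL2]; nlinarith
  have ha0 : 0 ≤ a := Real.sqrt_nonneg _
  have ha2 : a^2 = 4 - t^2/L^2 := Real.sq_sqrt hnn
  have hdiv0 : 0 ≤ t^2/L^2 := by positivity
  have haa : a ≤ 2 := by nlinarith
  set f : ℝ → ℝ := fun u => 2 * u^2 * max (L * Real.sqrt (4 - u^2) / (2 * Real.pi) - t / (2 * Real.pi)) 0 with hfdef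
  have hfc : Continuous f := by
    apply Continuous.mul (by continuity)
    exact (((continuous_const.mul ((continuous_const.sub (continuous_pow 2)).sqrt)).div_const _).sub continuous_const).max continuous_const
  have hint : ∀ b c : ℝ, IntervalIntegrable f MeasureTheory.volume b c :=
    fun b c => hfc.intervalIntegrable b c
  -- outside [-a,a] the integrand vanishes
  have hzero : ∀ u : ℝ, a ≤ |u| → f u = 0 := by
    intro u hu
    have hu2 : a^2 ≤ u^2 := by
      rw [← sq_abs u]; exact pow_le_pow_left₀ ha0 hu 2
    have h1 : 4 - u^2 ≤ t^2/L^2 := by linarith [ha2 ▸ hu2]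
    have h2 : Real.sqrt (4-u^2) ≤ t/L := by
      have h := Real.sqrt_le_sqrt h1
      rwa [show t^2/L^2 = (t/L)^2 by ring, Real.sqrt_sq (by positivity)] at h
    have h3 : L * Real.sqrt (4-u^2) / (2*Real.pi) - t/(2*Real.pi) ≤ 0 := by
      rw [sub_nonpos]
      apply div_le_div_of_nonneg_right ?_ (by positivity)
      calc L * Real.sqrt (4-u^2) ≤ L * (t/L) := by nlinarith [Real.sqrt_nonneg (4-u^2)]
        _ = t := by field_simp
    simp only [hfdef]
    rw [max_eq_right h3]
    ring
  -- inside [-a,a] the integrand is the explicit function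
  have hmax : ∀ u : ℝ, |u| ≤ a → f u = (L*u^2*Real.sqrt (4-u^2) - t*u^2)/Real.pi := by
    intro u hu
    have hu2 : u^2 ≤ a^2 := by
      rw [← sq_abs u]; exact pow_le_pow_left₀ (abs_nonneg u) hu 2
    have h1 : t^2/L^2 ≤ 4 - u^2 := by linarith [ha2 ▸ hu2]
    have h2 : t/L ≤ Real.sqrt (4-u^2) := by
      have h := Real.sqrt_le_sqrt h1
      rwa [show t^2/L^2 = (t/L)^2 by ring, Real.sqrt_sq (by positivity)] at h
    have h3 : 0 ≤ L * Real.sqrt (4-u^2) / (2*Real.pi) - t/(2*Real.pi) := by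
      rw [sub_nonneg]
      apply div_le_div_of_nonneg_right ?_ (by positivity)
      calc t = L * (t/L) := by field_simp
        _ ≤ L * Real.sqrt (4-u^2) := by nlinarith
    simp only [hfdef]
    rw [max_eq_left h3]
    field_simp
  have hz1 : (∫ u in (-2:ℝ)..(-a), f u) = 0 := by
    rw [show (0:ℝ) = ∫ u in (-2:ℝ)..(-a), (0:ℝ) by simp]
    apply intervalIntegral.integral_congr
    intro u hu
    rw [Set.uIcc_of_le (by linarith)] at hu
    have hu0 : u ≤ 0 := le_trans hu.2 (by linarith)
    exact hzero u (by rw [abs_of_nonpos hu0]; linarith [hu.2]) 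
  have hz2 : (∫ u in a..(2:ℝ), f u) = 0 := by
    rw [show (0:ℝ) = ∫ u in a..(2:ℝ), (0:ℝ) by simp]
    apply intervalIntegral.integral_congr
    intro u hu
    rw [Set.uIcc_of_le (by linarith)] at hu
    exact hzero u (by rw [abs_of_nonneg (le_trans ha0 hu.1)]; exact hu.1)
  -- the middle integral via FTC
  set G : ℝ → ℝ := fun u => (L*(2*Real.arcsin (u/2) - u*(4-2*u^2)*Real.sqrt (4-u^2)/8) - t*u^3/3)/Real.pi with hGdef
  have hGc : Continuous G := by
    apply Continuous.div_const
    apply Continuous.sub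
    · apply continuous_const.mul
      apply Continuous.sub
      · exact continuous_const.mul (Real.continuous_arcsin.comp (continuous_id.div_const 2))
      · exact ((continuous_id.mul (continuous_const.sub (continuous_const.mul (continuous_pow 2)))).mul
          ((continuous_const.sub (continuous_pow 2)).sqrt)).div_const _
    · exact (continuous_const.mul (continuous_pow 3)).div_const _
  have hmid : (∫ u in (-a)..a, f u) = G a - G (-a) := by
    rw [intervalIntegral.integral_congr (g := fun u => (L*u^2*Real.sqrt (4-u^2) - t*u^2)/Real.pi)
      (by
        intro u hu
        rw [Set.uIcc_of_le (by linarith : -a ≤ a)] at hu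
        exact hmax u (abs_le.mpr ⟨hu.1, hu.2⟩))]
    apply intervalIntegral.integral_eq_sub_of_hasDeriv_right_of_le (by linarith)
      (hGc.continuousOn)
      (fun x hx => ?_)
      (Continuous.intervalIntegrable (by
        apply Continuous.div_const
        apply Continuous.sub
        · exact (continuous_const.mul (continuous_pow 2)).mul ((continuous_const.sub (continuous_pow 2)).sqrt)
        · exact continuous_const.mul (continuous_pow 2)) _ _)
    exact (gue_deriv_aux_s5 L t x (by linarith [hx.1]) (by linarith [hx.2])).hasDerivWithinAt
  -- assemble
  have hsplit : (∫ u in (-2:ℝ)..2, f u)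
      = (∫ u in (-2:ℝ)..(-a), f u) + (∫ u in (-a)..a, f u) + (∫ u in a..(2:ℝ), f u) := by
    rw [intervalIntegral.integral_add_adjacent_intervals (hint (-2) (-a)) (hint (-a) a),
      intervalIntegral.integral_add_adjacent_intervals (hint (-2) a) (hint a 2)]
  rw [hsplit, hz1, hz2, hmid]
  -- final evaluation
  set s := Real.sqrt (4*L^2 - t^2) with hsdef
  have hs0 : 0 ≤ s := Real.sqrt_nonneg _
  have hs2 : s^2 = 4*L^2 - t^2 := Real.sq_sqrt (by nlinarith)
  have haL : a = s / L := by
    rw [hadef, show 4 - t^2/L^2 = (4*L^2 - t^2)/L^2 by field_simp, hsdef,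
      Real.sqrt_div (by nlinarith), Real.sqrt_sq hL.le]
  have hsa : Real.sqrt (4 - a^2) = t/L := by
    rw [ha2, show 4 - (4 - t^2/L^2) = (t/L)^2 by ring, Real.sqrt_sq (by positivity)]
  have hsna : Real.sqrt (4 - (-a)^2) = t/L := by rwa [neg_pow, show (-1:ℝ)^2 = 1 by norm_num, one_mul]
  have harg : a/2 = s/(2*L) := by rw [haL]; ring
  simp only [hGdef]
  rw [hsa, hsna, harg, show (-a)/2 = -(s/(2*L)) by rw [haL]; ring, Real.arcsin_neg, haL]
  have hπ' := Real.pi_ne_zero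
  field_simp
  linear_combination (-24*s*t) * hs2
end

section
/- Let g(k) = 1 if |k| < 1/2 and g(k) = 0 otherwise, let φ(k) = 0 for |k| ≤ 1/2 and φ(k) = 1/(2πik) for |k| > 1/2, and let G(k) be the 2×2 complex matrix with rows (g(k), −2πik·g(k)) and (φ(k), g(k)). Then for every real τ, (1/2)·∫_ℝ Tr( G(k)·G(k+τ) ) dk = 1 − 2|τ| + |τ|·log(1 + 2|τ|) if |τ| ≤ 1, and = −1 + |τ|·log((2|τ|+1)/(2|τ|−1)) if |τ| ≥ 1. -/
open MeasureTheory Real Matrix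

/-- The indicator `g(k)` of `(-1/2, 1/2)`, as a complex number. -/
noncomputable def gIndC (k : ℝ) : ℂ :=
  if |k| < 1/2 then 1 else 0

/-- `φ(k) = 0` for `|k| ≤ 1/2` and `φ(k) = 1/(2πik)` for `|k| > 1/2`. -/
noncomputable def phiF (k : ℝ) : ℂ :=
  if |k| ≤ 1/2 then 0 else 1 / (2 * Real.pi * Complex.I * k)

/-- The entrywise Fourier transform `G(k)` of the GOE 2×2 matrix sine kernel:
rows `(g(k), −2πik·g(k))` and `(φ(k), g(k))`. -/
noncomputable def Gmat (k : ℝ) : Matrix (Fin 2) (Fin 2) ℂ :=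
  !![gIndC k, -(2 * Real.pi * Complex.I * k) * gIndC k; phiF k, gIndC k]

noncomputable def indR (x : ℝ) : ℝ := if |x| < 1/2 then 1 else 0
noncomputable def indCR (x : ℝ) : ℝ := if 1/2 < |x| then 1 else 0
noncomputable def F1 (t k : ℝ) : ℝ := 2 * indR k * indR (k + t)
noncomputable def F2 (t k : ℝ) : ℝ := (k / (k + t)) * indR k * indCR (k + t)
noncomputable def F3 (t k : ℝ) : ℝ := ((k + t) / k) * indCR k * indR (k + t)
noncomputable def FF (t k : ℝ) : ℝ := F1 t k - F2 t k - F3 t k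

set_option maxHeartbeats 1000000 in
lemma trace_eq (τ k : ℝ) : (Gmat k * Gmat (k + τ)).trace = (FF τ k : ℂ) := by
  have hπ : (Real.pi : ℂ) ≠ 0 := by exact_mod_cast Real.pi_ne_zero
  have hI : Complex.I ≠ 0 := Complex.I_ne_zero
  have step1 : (Gmat k * Gmat (k + τ)).trace
      = gIndC k * gIndC (k+τ) * 2
        + (-(2 * Real.pi * Complex.I * k) * gIndC k) * phiF (k+τ)
        + phiF k * (-(2 * Real.pi * Complex.I * (k+τ)) * gIndC (k+τ)) := by
    simp [Gmat, Matrix.trace_fin_two, Matrix.mul_apply, Fin.sum_univ_two]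
    ring
  rw [step1]
  have hk0 : ¬ |k| ≤ 1/2 → (k : ℂ) ≠ 0 := by
    intro h
    have : k ≠ 0 := by rintro rfl; simp at h
    exact_mod_cast this
  have hkt0 : ¬ |k + τ| ≤ 1/2 → (k : ℂ) + τ ≠ 0 := by
    intro h
    have : k + τ ≠ 0 := by intro hh; rw [hh] at h; simp at h
    exact_mod_cast this
  simp only [gIndC, phiF, FF, F1, F2, F3, indR, indCR]
  push_cast
  split_ifs with h1 h2 h3 h4 h5 h6 h7 h8 h9 h10 h11 h12 h13 h14 h15
  all_goals try (exfalso; linarith)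
  all_goals push_cast
  all_goals try norm_num
  all_goals first
    | (field_simp [hk0 (by assumption)]; ring_nf; try (simp only [Complex.I_sq]; ring_nf))
    | (field_simp [hkt0 (by assumption)]; ring_nf; try (simp only [Complex.I_sq]; ring_nf))
    | (field_simp [hk0 (by assumption), hkt0 (by assumption)]; ring_nf; try (simp only [Complex.I_sq]; ring_nf))

lemma F1_eq {t : ℝ} (ht : 0 ≤ t) :
    F1 t = Set.indicator (Set.Ioo (-(1/2)) (1/2 - t)) (fun _ => (2:ℝ)) := by
  funext k
  simp only [F1, indR, Set.indicator, Set.mem_Ioo]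
  by_cases h1 : |k| < 1/2 <;> by_cases h2 : |k + t| < 1/2
  · obtain ⟨a1, b1⟩ := abs_lt.1 h1
    obtain ⟨a2, b2⟩ := abs_lt.1 h2
    have hs : -(1/2) < k ∧ k < 1/2 - t := ⟨by linarith, by linarith⟩
    simp only [h1, h2, hs, if_true, if_false, ite_true, ite_false, mul_zero, zero_mul, mul_one, one_mul, and_self, true_and, and_true]
  · have hs : ¬(-(1/2) < k ∧ k < 1/2 - t) := by
      rintro ⟨ha, hb⟩; exact h2 (abs_lt.2 ⟨by linarith, by linarith⟩)
    simp only [h1, h2, hs, if_true, if_false, ite_true, ite_false, mul_zero, zero_mul, mul_one, one_mul, and_self, true_and, and_true]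
  · have hs : ¬(-(1/2) < k ∧ k < 1/2 - t) := by
      rintro ⟨ha, hb⟩; exact h1 (abs_lt.2 ⟨by linarith, by linarith⟩)
    simp only [h1, h2, hs, if_true, if_false, ite_true, ite_false, mul_zero, zero_mul, mul_one, one_mul, and_self, true_and, and_true]
  · have hs : ¬(-(1/2) < k ∧ k < 1/2 - t) := by
      rintro ⟨ha, hb⟩; exact h1 (abs_lt.2 ⟨by linarith, by linarith⟩)
    simp only [h1, h2, hs, if_true, if_false, ite_true, ite_false, mul_zero, zero_mul, mul_one, one_mul, and_self, true_and, and_true]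

lemma F2_eq {t : ℝ} (ht : 0 ≤ t) :
    F2 t = Set.indicator (Set.Ioo (max (1/2 - t) (-(1/2))) (1/2)) (fun k => k / (k + t)) := by
  funext k
  simp only [F2, indR, indCR, Set.indicator, Set.mem_Ioo]
  have hm1 : (1:ℝ)/2 - t ≤ max (1/2 - t) (-(1/2)) := le_max_left _ _
  have hm2 : (-(1/2):ℝ) ≤ max (1/2 - t) (-(1/2)) := le_max_right _ _
  by_cases h1 : |k| < 1/2 <;> by_cases h2 : 1/2 < |k + t|
  · obtain ⟨a1, b1⟩ := abs_lt.1 h1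
    have hs : max (1/2 - t) (-(1/2)) < k ∧ k < 1/2 := by
      refine ⟨max_lt ?_ (by linarith), b1⟩
      rcases lt_or_ge (1/2) (k + t) with h | h
      · linarith
      · exfalso
        have : |k + t| ≤ 1/2 := abs_le.2 ⟨by linarith, h⟩
        linarith
    simp only [h1, h2, hs, if_true, if_false, ite_true, ite_false, mul_zero, zero_mul, mul_one, one_mul, and_self, true_and, and_true]
  · have hs : ¬(max (1/2 - t) (-(1/2)) < k ∧ k < 1/2) := by
      rintro ⟨ha, hb⟩
      have : 1/2 - t < k := lt_of_le_of_lt hm1 ha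
      exact h2 (lt_of_lt_of_le (by linarith) (le_abs_self _))
    simp only [h1, h2, hs, if_true, if_false, ite_true, ite_false, mul_zero, zero_mul, mul_one, one_mul, and_self, true_and, and_true]
  · have hs : ¬(max (1/2 - t) (-(1/2)) < k ∧ k < 1/2) := by
      rintro ⟨ha, hb⟩
      have : -(1/2) < k := lt_of_le_of_lt hm2 ha
      exact h1 (abs_lt.2 ⟨by linarith, hb⟩)
    simp only [h1, h2, hs, if_true, if_false, ite_true, ite_false, mul_zero, zero_mul, mul_one, one_mul, and_self, true_and, and_true]
  · have hs : ¬(max (1/2 - t) (-(1/2)) < k ∧ k < 1/2) := by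
      rintro ⟨ha, hb⟩
      have : -(1/2) < k := lt_of_le_of_lt hm2 ha
      exact h1 (abs_lt.2 ⟨by linarith, hb⟩)
    simp only [h1, h2, hs, if_true, if_false, ite_true, ite_false, mul_zero, zero_mul, mul_one, one_mul, and_self, true_and, and_true]

lemma F3_comp (t k : ℝ) : F3 t k = F2 t (-(k + t)) := by
  simp only [F2, F3, indR, indCR]
  have h2 : -(k + t) + t = -k := by ring
  rw [h2, abs_neg, abs_neg, neg_div_neg_eq]
  ring

lemma integral_F3 (t : ℝ) : ∫ k, F3 t k = ∫ k, F2 t k := by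
  simp only [F3_comp]
  rw [show (fun k => F2 t (-(k + t))) = (fun k => (fun x => F2 t (-x)) (k + t)) from rfl]
  rw [integral_add_right_eq_self (fun x => F2 t (-x)) t]
  exact integral_neg_eq_self _ _

lemma integrable_F1 {t : ℝ} (ht : 0 ≤ t) : Integrable (F1 t) := by
  rw [F1_eq ht]
  refine (integrable_indicator_iff measurableSet_Ioo).2 ?_
  exact integrableOn_const (by rw [Real.volume_Ioo]; exact ENNReal.ofReal_ne_top)

lemma cont_F2core {t : ℝ} (ht : 0 ≤ t) :
    ContinuousOn (fun k : ℝ => k / (k + t)) (Set.Icc (max (1/2 - t) (-(1/2))) (1/2)) := by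
  apply ContinuousOn.div continuousOn_id (by fun_prop)
  intro x hx
  have h1 : 1/2 - t ≤ x := le_trans (le_max_left _ _) hx.1
  have : (0:ℝ) < x + t := by linarith
  exact ne_of_gt this

lemma integrable_F2 {t : ℝ} (ht : 0 ≤ t) : Integrable (F2 t) := by
  rw [F2_eq ht]
  refine (integrable_indicator_iff measurableSet_Ioo).2 ?_
  exact ((cont_F2core ht).integrableOn_Icc).mono_set Set.Ioo_subset_Icc_self

lemma integrable_F3 {t : ℝ} (ht : 0 ≤ t) : Integrable (F3 t) := by
  have : F3 t = fun k => F2 t (-(k + t)) := funext (F3_comp t)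
  rw [this]
  exact ((integrable_F2 ht).comp_neg).comp_add_right t

lemma interval_int (t a b : ℝ) (h : ∀ x ∈ Set.uIcc a b, 0 < x + t) :
    ∫ x in a..b, x / (x + t)
      = (b - t * Real.log (b + t)) - (a - t * Real.log (a + t)) := by
  apply intervalIntegral.integral_eq_sub_of_hasDerivAt
  · intro x hx
    have hx0 : x + t ≠ 0 := ne_of_gt (h x hx)
    have hlog : HasDerivAt (fun y : ℝ => Real.log (y + t)) (1/(x+t)) x := by
      have := (Real.hasDerivAt_log hx0).comp x ((hasDerivAt_id x).add_const t)
      rw [one_div, ← mul_one (x + t)⁻¹]; exact this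
    have hd : HasDerivAt (fun y : ℝ => y - t * Real.log (y + t)) (1 - t * (1/(x+t))) x :=
      (hasDerivAt_id x).sub (hlog.const_mul t)
    refine hd.congr_deriv ?_
    rw [mul_one_div, sub_eq_iff_eq_add, ← add_div, div_self hx0]
  · apply ContinuousOn.intervalIntegrable
    exact ContinuousOn.div continuousOn_id (by fun_prop) fun x hx => ne_of_gt (h x hx)

lemma integral_F1 {t : ℝ} (ht : 0 ≤ t) :
    ∫ k, F1 t k = 2 * max (1 - t) 0 := by
  rw [F1_eq ht, integral_indicator_const _ measurableSet_Ioo, Real.volume_real_Ioo,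
    smul_eq_mul, show (1/2 - t - -(1/2) : ℝ) = 1 - t by ring]
  ring

lemma integral_F2' {t : ℝ} (ht : 0 ≤ t) :
    ∫ k, F2 t k
      = (1/2 - t * Real.log (1/2 + t))
        - (max (1/2 - t) (-(1/2)) - t * Real.log (max (1/2 - t) (-(1/2)) + t)) := by
  set a := max (1/2 - t) (-(1/2)) with ha
  have ha12 : a ≤ 1/2 := max_le (by linarith) (by norm_num)
  have hat : (1:ℝ)/2 ≤ a + t := by
    have := le_max_left (1/2 - t) (-(1/2):ℝ)
    linarith
  rw [F2_eq ht, integral_indicator measurableSet_Ioo, ← integral_Ioc_eq_integral_Ioo,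
    ← intervalIntegral.integral_of_le ha12]
  apply interval_int
  intro x hx
  rw [Set.uIcc_of_le ha12] at hx
  have := hx.1
  linarith

lemma integral_FF {t : ℝ} (ht : 0 ≤ t) :
    ∫ k, FF t k
      = 2 * max (1 - t) 0
        - 2 * ((1/2 - t * Real.log (1/2 + t))
             - (max (1/2 - t) (-(1/2)) - t * Real.log (max (1/2 - t) (-(1/2)) + t))) := by
  have step : ∫ k, FF t k = (∫ k, F1 t k) - (∫ k, F2 t k) - (∫ k, F3 t k) := by
    simp only [FF]
    have hf : Integrable (fun k => F1 t k - F2 t k) := (integrable_F1 ht).sub (integrable_F2 ht)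
    rw [integral_sub hf (integrable_F3 ht), integral_sub (integrable_F1 ht) (integrable_F2 ht)]
  rw [step, integral_F3, integral_F1 ht, integral_F2' ht]
  ring

lemma FF_neg (t k : ℝ) : FF t (-k) = FF (-t) k := by
  simp only [FF, F1, F2, F3, indR, indCR]
  have e1 : -k + t = -(k - t) := by ring
  rw [e1, abs_neg, abs_neg, neg_div_neg_eq, neg_div_neg_eq,
    show k + -t = k - t from by ring]

lemma integral_FF_abs (τ : ℝ) : ∫ k, FF τ k = ∫ k, FF |τ| k := by
  rcases abs_choice τ with h | h
  · rw [h]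
  · rw [h]
    have : ∀ k, FF (-τ) k = FF τ (-k) := fun k => (FF_neg τ k).symm
    simp only [this]
    exact (integral_neg_eq_self (FF τ) _).symm

/-- GOE two-level form factor from the matrix kernel:
`(1/2)∫_ℝ Tr(G(k)G(k+τ)) dk = 1 − 2|τ| + |τ| log(1+2|τ|)` for `|τ| ≤ 1`, and
`= −1 + |τ| log((2|τ|+1)/(2|τ|−1))` for `|τ| ≥ 1`. -/
theorem goe_matrix_kernel_form_factor (τ : ℝ) :
    (|τ| ≤ 1 →
      (1/2 : ℂ) * (∫ k : ℝ, (Gmat k * Gmat (k + τ)).trace)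
        = ((1 - 2 * |τ| + |τ| * Real.log (1 + 2 * |τ|) : ℝ) : ℂ)) ∧
    (1 ≤ |τ| →
      (1/2 : ℂ) * (∫ k : ℝ, (Gmat k * Gmat (k + τ)).trace)
        = ((-1 + |τ| * Real.log ((2 * |τ| + 1) / (2 * |τ| - 1)) : ℝ) : ℂ)) := by
  have key : (∫ k : ℝ, (Gmat k * Gmat (k + τ)).trace) = ((∫ k, FF |τ| k : ℝ) : ℂ) := by
    have : ∀ k : ℝ, (Gmat k * Gmat (k + τ)).trace = ((FF τ k : ℝ) : ℂ) := trace_eq τ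
    simp only [this]
    have h2 := integral_ofReal (𝕜 := ℂ) (f := FF τ) (μ := volume)
    rw [show (∫ k, FF τ k) = ∫ k, FF |τ| k from integral_FF_abs τ] at h2
    exact h2
  set t := |τ| with htdef
  have ht0 : 0 ≤ t := abs_nonneg τ
  have hcast : ∀ x : ℝ, (1/2 : ℂ) * ((x : ℝ) : ℂ) = (((1/2) * x : ℝ) : ℂ) := by
    intro x; push_cast; ring
  constructor
  · intro h1
    rw [key, hcast, Complex.ofReal_inj, integral_FF ht0]
    have hmax1 : max (1 - t) 0 = 1 - t := max_eq_left (by linarith)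
    have hmax2 : max (1/2 - t) (-(1/2)) = 1/2 - t := max_eq_left (by linarith)
    have hlog : Real.log (1 + 2 * t) = Real.log (1/2 + t) - Real.log (1/2) := by
      rw [show (1 + 2 * t : ℝ) = (1/2 + t) / (1/2) by ring,
        Real.log_div (by linarith) (by norm_num)]
    rw [hmax1, hmax2, show (1/2 - t + t : ℝ) = 1/2 by ring, hlog]
    ring
  · intro h1
    rw [key, hcast, Complex.ofReal_inj, integral_FF ht0]
    have hmax1 : max (1 - t) 0 = 0 := max_eq_right (by linarith)
    have hmax2 : max (1/2 - t) (-(1/2)) = -(1/2) := max_eq_right (by linarith)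
    have hlog : Real.log ((2 * t + 1) / (2 * t - 1))
        = Real.log (1/2 + t) - Real.log (t - 1/2) := by
      rw [show (2 * t + 1) / (2 * t - 1) = (1/2 + t) / (t - 1/2) from by
        rw [div_eq_div_iff (by linarith) (by linarith)]; ring,
        Real.log_div (by linarith) (by intro h; rw [sub_eq_zero] at h; linarith)]
    rw [hmax1, hmax2, show (-(1/2) + t : ℝ) = t - 1/2 by ring, hlog]
    ring
end
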